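/- Let f : {0,1}^n → {0,1} be a symmetric Boolean function with alternation number alt(f). Then N(f) ≥ alt(f)/2, where N(f) is the 1/3-approximate non-deterministic degree of f. -/

import Mathlib

open MvPolynomial

noncomputable section

/-- Real value of a Boolean. -/
def bval (b : Bool) : ℝ := if b then 1 else 0

/-- Evaluate a real multivariate polynomial at a Boolean point. -/
def evalB {ι : Type*} (p : MvPolynomial ι ℝ) (x : ι → Bool) : ℝ :=
  MvPolynomial.eval (fun i => bval (x i)) p

/-- `p` is an `ε`-approximate non-deterministic polynomial for `f`. -/
def IsApproxNdet {ι : Type*} (ε : ℝ) (f : (ι → Bool) → Bool)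
    (p : MvPolynomial ι ℝ) : Prop :=
  ∀ x, (f x = false → |evalB p x| ≤ ε) ∧ (f x = true → 1 ≤ |evalB p x|)

/-- The `ε`-approximate non-deterministic degree `N_ε(f)`. -/
def approxNdeg {ι : Type*} (ε : ℝ) (f : (ι → Bool) → Bool) : ℕ :=
  sInf {d | ∃ p : MvPolynomial ι ℝ, IsApproxNdet ε f p ∧ p.totalDegree ≤ d}

/-- `N(f) = N_{1/3}(f)`. -/
def N13 {ι : Type*} (f : (ι → Bool) → Bool) : ℕ := approxNdeg (1/3) f

/-- `M(f) = max{N(f), N(¬f)}`. -/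
def M13 {ι : Type*} (f : (ι → Bool) → Bool) : ℕ :=
  max (N13 f) (N13 fun x => !(f x))

/-- `p` sign-represents `f`. -/
def SignRep {ι : Type*} (p : MvPolynomial ι ℝ) (f : (ι → Bool) → Bool) : Prop :=
  ∀ x, evalB p x < 0 ↔ f x = true

/-- Sign degree (threshold degree). -/
def signDeg {ι : Type*} (f : (ι → Bool) → Bool) : ℕ :=
  sInf {d | ∃ p : MvPolynomial ι ℝ, SignRep p f ∧ p.totalDegree ≤ d}

/-- `1/3`-approximate degree. -/
def approxDeg {ι : Type*} (f : (ι → Bool) → Bool) : ℕ :=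
  sInf {d | ∃ p : MvPolynomial ι ℝ,
    (∀ x, |evalB p x - bval (f x)| ≤ 1/3) ∧ p.totalDegree ≤ d}

/-- Exact degree of a Boolean function. -/
def degB {ι : Type*} (f : (ι → Bool) → Bool) : ℕ :=
  sInf {d | ∃ p : MvPolynomial ι ℝ,
    (∀ x, evalB p x = bval (f x)) ∧ p.totalDegree ≤ d}

/-- Hamming weight. -/
def wt {ι : Type*} [Fintype ι] (x : ι → Bool) : ℕ :=
  (Finset.univ.filter fun i => x i = true).card

/-- Flip the bits of `x` inside the block `B`. -/
def flipB {ι : Type*} [DecidableEq ι] (x : ι → Bool) (B : Finset ι) : ι → Bool :=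
  fun i => if i ∈ B then !(x i) else x i

/-- Sensitivity of `f` at `x`. -/
def sensAt {ι : Type*} [Fintype ι] [DecidableEq ι]
    (f : (ι → Bool) → Bool) (x : ι → Bool) : ℕ :=
  (Finset.univ.filter fun i : ι => f (flipB x {i}) ≠ f x).card

/-- Sensitivity of `f`. -/
def sens {ι : Type*} [Fintype ι] [DecidableEq ι] (f : (ι → Bool) → Bool) : ℕ :=
  sSup {s | ∃ x, sensAt f x = s}

/-- 0-sensitivity. -/
def sens₀ {ι : Type*} [Fintype ι] [DecidableEq ι] (f : (ι → Bool) → Bool) : ℕ :=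
  sSup {s | ∃ x, f x = false ∧ sensAt f x = s}

/-- 1-sensitivity. -/
def sens₁ {ι : Type*} [Fintype ι] [DecidableEq ι] (f : (ι → Bool) → Bool) : ℕ :=
  sSup {s | ∃ x, f x = true ∧ sensAt f x = s}

/-- Block sensitivity of `f`. -/
def blockSens {ι : Type*} [Fintype ι] [DecidableEq ι] (f : (ι → Bool) → Bool) : ℕ :=
  sSup {k | ∃ x, ∃ B : Fin k → Finset ι,
    (∀ i j, i ≠ j → Disjoint (B i) (B j)) ∧ ∀ i, f (flipB x (B i)) ≠ f x}

/-- `S` is a certificate for `f` at `x`. -/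
def IsCert {ι : Type*} (f : (ι → Bool) → Bool) (x : ι → Bool) (S : Finset ι) : Prop :=
  ∀ y, (∀ i ∈ S, y i = x i) → f y = f x

/-- Certificate complexity at `x`. -/
def certAt {ι : Type*} (f : (ι → Bool) → Bool) (x : ι → Bool) : ℕ :=
  sInf {c | ∃ S : Finset ι, IsCert f x S ∧ S.card ≤ c}

/-- Certificate complexity of `f`. -/
def cert {ι : Type*} (f : (ι → Bool) → Bool) : ℕ :=
  sSup {c | ∃ x, certAt f x = c}

/-- Deterministic decision trees querying variables indexed by `ι`. -/
inductive DTree (ι : Type*) where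
  | leaf : Bool → DTree ι
  | node : ι → DTree ι → DTree ι → DTree ι

def DTree.evalT {ι : Type*} : DTree ι → (ι → Bool) → Bool
  | .leaf b, _ => b
  | .node i t0 t1, x => if x i then t1.evalT x else t0.evalT x

def DTree.depth {ι : Type*} : DTree ι → ℕ
  | .leaf _ => 0
  | .node _ t0 t1 => 1 + max t0.depth t1.depth

/-- Deterministic query complexity `D(f)`. -/
def Dquery {ι : Type*} (f : (ι → Bool) → Bool) : ℕ :=
  sInf {d | ∃ t : DTree ι, (∀ x, t.evalT x = f x) ∧ t.depth ≤ d}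

/-- `P` is a monotone path from `0^n` to `1^n`. -/
def IsMonoPath {ι : Type*} [Fintype ι] [DecidableEq ι] (P : ℕ → ι → Bool) : Prop :=
  P 0 = (fun _ => false) ∧ P (Fintype.card ι) = (fun _ => true) ∧
  ∀ t < Fintype.card ι, ∃ j, P t j = false ∧ P (t + 1) = Function.update (P t) j true

/-- Alternation number of `f` along the path `P`. -/
def pathAlt {ι : Type*} [Fintype ι] (f : (ι → Bool) → Bool) (P : ℕ → ι → Bool) : ℕ :=
  ((Finset.range (Fintype.card ι)).filter fun t => f (P t) ≠ f (P (t + 1))).card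

/-- Alternation number of `f`. -/
def altNum {ι : Type*} [Fintype ι] [DecidableEq ι] (f : (ι → Bool) → Bool) : ℕ :=
  sSup {a | ∃ P, IsMonoPath P ∧ pathAlt f P = a}

/-- Zebra function: all monotone paths have the same alternation number. -/
def IsZebra {ι : Type*} [Fintype ι] [DecidableEq ι] (f : (ι → Bool) → Bool) : Prop :=
  ∀ P Q, IsMonoPath P → IsMonoPath Q → pathAlt f P = pathAlt f Q

/-- Symmetric Boolean function. -/
def IsSymmF {ι : Type*} [Fintype ι] (f : (ι → Bool) → Bool) : Prop :=
  ∀ x y, wt x = wt y → f x = f y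

/-- Monotonically increasing. -/
def MonoIncr {ι : Type*} (f : (ι → Bool) → Bool) : Prop :=
  ∀ x y : ι → Bool, (∀ i, x i = true → y i = true) → f x = true → f y = true

/-- Monotonically decreasing. -/
def MonoDecr {ι : Type*} (f : (ι → Bool) → Bool) : Prop :=
  ∀ x y : ι → Bool, (∀ i, x i = true → y i = true) → f y = true → f x = true

/-- Monotone (increasing or decreasing). -/
def Monot {ι : Type*} (f : (ι → Bool) → Bool) : Prop := MonoIncr f ∨ MonoDecr f

/-- Non-constant. -/
def NonConst {ι : Type*} (f : (ι → Bool) → Bool) : Prop := ∃ x y, f x ≠ f y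

end


open Finset Polynomial in
private lemma natid_stmt11 {n k s : ℕ} (hkn : k ≤ n) :
    n.choose k * k.descFactorial s
      = (if s ≤ k then (n - s).choose (k - s) else 0) * n.descFactorial s := by
  split_ifs with hs
  · have h1 : n.choose k * k.descFactorial s * ((k - s).factorial * (n - k).factorial)
        = (n - s).choose (k - s) * n.descFactorial s * ((k - s).factorial * (n - k).factorial) := by
      have e1 : n.choose k * k.descFactorial s * ((k - s).factorial * (n - k).factorial)
          = n.choose k * ((k - s).factorial * k.descFactorial s) * (n - k).factorial := by ring
      rw [e1, Nat.factorial_mul_descFactorial hs, Nat.choose_mul_factorial_mul_factorial hkn]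
      have e2 : (n - s).choose (k - s) * n.descFactorial s
            * ((k - s).factorial * (n - k).factorial)
          = (n - s).choose (k - s) * (k - s).factorial * ((n - s) - (k - s)).factorial
            * n.descFactorial s := by
        rw [show (n - s) - (k - s) = n - k by omega]; ring
      rw [e2, Nat.choose_mul_factorial_mul_factorial (by omega),
        Nat.factorial_mul_descFactorial (le_trans hs hkn)]
    exact Nat.eq_of_mul_eq_mul_right (by positivity) h1
  · rw [Nat.descFactorial_eq_zero_iff_lt.mpr (by omega), Nat.mul_zero, Nat.zero_mul]

open Finset Polynomial in
private lemma count_superset_stmt11 (n k : ℕ) (S : Finset (Fin n)) :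
    ((Finset.univ : Finset (Fin n → Bool)).filter
      fun x => wt x = k ∧ ∀ i ∈ S, x i = true).card =
    if S.card ≤ k then (n - S.card).choose (k - S.card) else 0 := by
  split_ifs with hs
  · have hrhs : (n - S.card).choose (k - S.card)
        = ((Sᶜ : Finset (Fin n)).powersetCard (k - S.card)).card := by
      rw [Finset.card_powersetCard, Finset.card_compl, Fintype.card_fin]
    rw [hrhs]
    refine Finset.card_nbij' (fun x => (Finset.univ.filter fun j => x j = true) \ S)
      (fun T => fun i => decide (i ∈ S ∨ i ∈ T)) ?_ ?_ ?_ ?_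
    · intro x hx
      simp only [Finset.mem_coe, mem_filter, mem_univ, true_and] at hx
      obtain ⟨hw, hS⟩ := hx
      have hsub : S ⊆ Finset.univ.filter fun j => x j = true := by
        intro i hi; simp [hS i hi]
      rw [Finset.mem_coe, mem_powersetCard]
      constructor
      · intro i hi; simp only [mem_sdiff] at hi; simp [hi.2]
      · rw [card_sdiff_of_subset hsub]
        have hw' : (Finset.univ.filter fun j => x j = true).card = k := hw
        rw [hw']
    · intro T hT
      rw [Finset.mem_coe, mem_powersetCard] at hT
      obtain ⟨hTc, hTcard⟩ := hT
      have hdisj : Disjoint S T := by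
        rw [disjoint_left]; intro a haS haT
        have := hTc haT; simp [haS] at this
      simp only [Finset.mem_coe, mem_filter, mem_univ, true_and]
      constructor
      · have : (Finset.univ.filter fun i => decide (i ∈ S ∨ i ∈ T) = true) = S ∪ T := by
          ext i; simp [mem_union]
        rw [wt, this, card_union_of_disjoint hdisj, hTcard]
        omega
      · intro i hi; simp [hi]
    · intro x hx
      simp only [Finset.mem_coe, mem_filter, mem_univ, true_and] at hx
      funext a
      by_cases haS : a ∈ S
      · simp [haS, hx.2 a haS]
      · by_cases hxa : x a = true <;> simp [haS, hxa]
    · intro T hT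
      rw [Finset.mem_coe, mem_powersetCard] at hT
      have hdisj : Disjoint S T := by
        rw [disjoint_left]; intro a haS haT
        have := hT.1 haT; simp [haS] at this
      ext a
      simp only [mem_sdiff, mem_filter, mem_univ, true_and, decide_eq_true_eq]
      constructor
      · rintro ⟨h1 | h1, h2⟩
        · exact absurd h1 h2
        · exact h1
      · intro ha
        exact ⟨Or.inr ha, fun haS => (disjoint_left.1 hdisj haS) ha⟩
  · rw [Finset.card_eq_zero, Finset.filter_eq_empty_iff]
    rintro x - ⟨hw, hS⟩
    have hsub : S ⊆ Finset.univ.filter fun j => x j = true := by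
      intro i hi; simp [hS i hi]
    have h2 : S.card ≤ wt x := Finset.card_le_card hsub
    omega

open Finset Polynomial in
private lemma layer_card_stmt11 (n k : ℕ) :
    ((Finset.univ : Finset (Fin n → Bool)).filter fun x => wt x = k).card = n.choose k := by
  have := count_superset_stmt11 n k ∅
  simpa using this

open Finset Polynomial in
private lemma sym_stmt11 (n : ℕ) (q : MvPolynomial (Fin n) ℝ) :
    ∃ Q : Polynomial ℝ, Q.natDegree ≤ q.totalDegree ∧
    ∀ k ≤ n, (n.choose k : ℝ) * Q.eval (k : ℝ) =
      ∑ x ∈ Finset.univ.filter (fun x : Fin n → Bool => wt x = k), evalB q x := by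
  classical
  refine ⟨∑ m ∈ q.support,
    (q.coeff m / (n.descFactorial m.support.card : ℝ)) • descPochhammer ℝ m.support.card, ?_, ?_⟩
  · refine Polynomial.natDegree_sum_le_of_forall_le _ _ fun m hm => ?_
    refine (Polynomial.natDegree_smul_le _ _).trans ?_
    rw [descPochhammer_natDegree]
    calc m.support.card = ∑ i ∈ m.support, 1 := by rw [Finset.card_eq_sum_ones]
      _ ≤ ∑ i ∈ m.support, m i := Finset.sum_le_sum fun i hi =>
          Nat.one_le_iff_ne_zero.mpr (Finsupp.mem_support_iff.mp hi)
      _ = m.sum fun _ e => e := rfl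
      _ ≤ q.totalDegree := MvPolynomial.le_totalDegree hm
  · intro k hkn
    have hrhs : ∀ x : Fin n → Bool, evalB q x
        = ∑ m ∈ q.support, q.coeff m * ∏ i ∈ m.support, bval (x i) ^ m i := by
      intro x; rw [evalB, MvPolynomial.eval_eq]
    have hprod : ∀ (m : Fin n →₀ ℕ) (x : Fin n → Bool),
        (∏ i ∈ m.support, bval (x i) ^ m i)
          = if (∀ i ∈ m.support, x i = true) then 1 else 0 := by
      intro m x
      by_cases h : ∀ i ∈ m.support, x i = true
      · rw [if_pos h]
        apply Finset.prod_eq_one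
        intro i _
        by_cases hm : m i = 0
        · rw [hm, pow_zero]
        · rw [h i (Finsupp.mem_support_iff.mpr hm)]; simp [bval]
      · rw [if_neg h]
        push_neg at h
        obtain ⟨i, hi, hxi⟩ := h
        refine Finset.prod_eq_zero hi ?_
        have hxi' : x i = false := by simpa using hxi
        rw [hxi']
        have : m i ≠ 0 := Finsupp.mem_support_iff.mp hi
        simp [bval, zero_pow this]
    have hsum : ∑ x ∈ Finset.univ.filter (fun x : Fin n → Bool => wt x = k), evalB q x
        = ∑ m ∈ q.support, q.coeff m *
            (if m.support.card ≤ k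
              then ((n - m.support.card).choose (k - m.support.card) : ℝ) else 0) := by
      rw [Finset.sum_congr rfl fun x _ => hrhs x, Finset.sum_comm]
      refine Finset.sum_congr rfl fun m _ => ?_
      rw [← Finset.mul_sum]
      congr 1
      rw [Finset.sum_congr rfl fun x _ => hprod m x, Finset.sum_boole, Finset.filter_filter]
      rw [show ((Finset.univ : Finset (Fin n → Bool)).filter
          fun x => wt x = k ∧ ∀ i ∈ m.support, x i = true).card
          = if m.support.card ≤ k
            then (n - m.support.card).choose (k - m.support.card) else 0
        from count_superset_stmt11 n k m.support]
      split_ifs <;> simp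
    rw [hsum, Polynomial.eval_finset_sum, Finset.mul_sum]
    refine Finset.sum_congr rfl fun m _ => ?_
    set s := m.support.card with hs
    have hsn : s ≤ n := by
      have := Finset.card_le_card (Finset.subset_univ m.support)
      simpa [Fintype.card_fin] using this
    have hdne : (n.descFactorial s : ℝ) ≠ 0 := by
      have h0 : n.descFactorial s ≠ 0 := by
        rw [Ne, Nat.descFactorial_eq_zero_iff_lt]; omega
      exact_mod_cast h0
    rw [Polynomial.eval_smul, smul_eq_mul, descPochhammer_eval_eq_descFactorial]
    have key := natid_stmt11 (n := n) (k := k) (s := s) hkn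
    by_cases h : s ≤ k
    · rw [if_pos h] at key ⊢
      have keyR : (n.choose k : ℝ) * (k.descFactorial s : ℝ)
          = ((n - s).choose (k - s) : ℝ) * (n.descFactorial s : ℝ) := by exact_mod_cast key
      field_simp
      linear_combination MvPolynomial.coeff m q * keyR
    · rw [if_neg h] at key ⊢
      have h0 : k.descFactorial s = 0 := Nat.descFactorial_eq_zero_iff_lt.mpr (by omega)
      rw [h0]
      push_cast
      ring

open Finset Polynomial in
private lemma exists_ndet_stmt11 (n : ℕ) (f : (Fin n → Bool) → Bool) :
    ∃ p : MvPolynomial (Fin n) ℝ, IsApproxNdet (1/3) f p := by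
  classical
  refine ⟨∑ x ∈ Finset.univ.filter (fun x => f x = true),
    ∏ i, (if x i then MvPolynomial.X i else 1 - MvPolynomial.X i), ?_⟩
  have hev : ∀ y, evalB (∑ x ∈ Finset.univ.filter (fun x => f x = true),
      ∏ i, (if x i then MvPolynomial.X i else 1 - MvPolynomial.X i)) y
      = if f y = true then 1 else 0 := by
    intro y
    rw [evalB, map_sum]
    have hterm : ∀ x : Fin n → Bool,
        MvPolynomial.eval (fun i => bval (y i))
          (∏ i, (if x i then MvPolynomial.X i else 1 - MvPolynomial.X i))
        = if x = y then 1 else 0 := by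
      intro x
      rw [map_prod]
      have hfac : ∀ i, MvPolynomial.eval (fun i => bval (y i))
          (if x i then MvPolynomial.X i else 1 - MvPolynomial.X i)
          = if x i = y i then 1 else 0 := by
        intro i
        by_cases hx : x i <;> by_cases hy : y i <;> simp [hx, hy, bval]
      rw [Finset.prod_congr rfl fun i _ => hfac i]
      by_cases hxy : x = y
      · subst hxy; simp
      · rw [if_neg hxy]
        obtain ⟨i, hi⟩ := Function.ne_iff.mp hxy
        exact Finset.prod_eq_zero (Finset.mem_univ i) (by simp [hi])
    rw [Finset.sum_congr rfl fun x _ => hterm x, Finset.sum_ite_eq' _ y]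
    by_cases hfy : f y = true <;> simp [hfy]
  intro y
  constructor
  · intro hfy
    rw [hev y, if_neg (by simp [hfy])]
    norm_num
  · intro hfy
    rw [hev y, if_pos hfy]
    norm_num

open Finset Polynomial in
private lemma wt_path_stmt11 {n : ℕ} {P : ℕ → Fin n → Bool} (hP : IsMonoPath P) :
    ∀ t, t ≤ n → wt (P t) = t := by
  intro t
  induction t with
  | zero => intro _; rw [hP.1]; simp [wt]
  | succ t ih =>
    intro ht
    obtain ⟨j, hj, heq⟩ := hP.2.2 t (by simpa [Fintype.card_fin] using ht)
    rw [heq]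
    have hfil : (Finset.univ.filter fun i => Function.update (P t) j true i = true)
        = insert j (Finset.univ.filter fun i => P t i = true) := by
      ext i
      by_cases hij : i = j
      · subst hij; simp [Function.update_self]
      · simp [Function.update_of_ne hij, hij]
    rw [wt, hfil, Finset.card_insert_of_notMem (by simp [hj]), ← wt, ih (by omega)]

/-- symmetric functions: `N(f) ≥ alt(f)/2`. -/
theorem stmt11 {n : ℕ} (f : (Fin n → Bool) → Bool) (hf : IsSymmF f) :
    altNum f ≤ 2 * N13 f := by
  classical
  have hne : {d | ∃ p : MvPolynomial (Fin n) ℝ,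
      IsApproxNdet (1/3) f p ∧ p.totalDegree ≤ d}.Nonempty := by
    obtain ⟨p, hp⟩ := exists_ndet_stmt11 n f
    exact ⟨p.totalDegree, p, hp, le_rfl⟩
  obtain ⟨p, hp, hdeg⟩ : N13 f ∈ {d | ∃ p : MvPolynomial (Fin n) ℝ,
      IsApproxNdet (1/3) f p ∧ p.totalDegree ≤ d} := Nat.sInf_mem hne
  obtain ⟨Q, hQdeg, hQev⟩ := sym_stmt11 n (p ^ 2)
  have hQdeg2 : Q.natDegree ≤ 2 * N13 f := by
    refine hQdeg.trans ((MvPolynomial.totalDegree_pow p 2).trans ?_)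
    omega
  have hsq : ∀ x, evalB (p ^ 2) x = (evalB p x) ^ 2 := fun x => by
    rw [evalB, map_pow]; rfl
  have hval : ∀ k, k ≤ n → ∀ y : Fin n → Bool, wt y = k →
      (f y = true → 1 ≤ Q.eval (k : ℝ)) ∧ (f y = false → Q.eval (k : ℝ) ≤ 1/9) := by
    intro k hk y hy
    have hc : 0 < (n.choose k : ℝ) := by exact_mod_cast Nat.choose_pos hk
    have heq := hQev k hk
    have hcard : ((Finset.univ : Finset (Fin n → Bool)).filter
        fun x => wt x = k).card = n.choose k := layer_card_stmt11 n k
    constructor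
    · intro hfy
      have hterm : ∀ x ∈ (Finset.univ : Finset (Fin n → Bool)).filter (fun x => wt x = k),
          (1 : ℝ) ≤ evalB (p ^ 2) x := by
        intro x hx
        simp only [Finset.mem_filter, Finset.mem_univ, true_and] at hx
        have hfx : f x = true := by rw [hf x y (by rw [hx, hy])]; exact hfy
        have h1 := (hp x).2 hfx
        rw [hsq]
        nlinarith [abs_nonneg (evalB p x), sq_abs (evalB p x)]
      have hlow := Finset.card_nsmul_le_sum _ _ _ hterm
      rw [hcard, nsmul_eq_mul, mul_one] at hlow
      rw [← heq] at hlow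
      nlinarith
    · intro hfy
      have hterm : ∀ x ∈ (Finset.univ : Finset (Fin n → Bool)).filter (fun x => wt x = k),
          evalB (p ^ 2) x ≤ 1/9 := by
        intro x hx
        simp only [Finset.mem_filter, Finset.mem_univ, true_and] at hx
        have hfx : f x = false := by rw [hf x y (by rw [hx, hy])]; exact hfy
        have h1 := (hp x).1 hfx
        rw [hsq]
        nlinarith [abs_nonneg (evalB p x), sq_abs (evalB p x)]
      have hhigh := Finset.sum_le_card_nsmul _ _ _ hterm
      rw [hcard, nsmul_eq_mul] at hhigh
      rw [← heq] at hhigh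
      nlinarith
  refine csSup_le' ?_
  rintro a ⟨P, hP, rfl⟩
  rw [pathAlt]
  set T := (Finset.range (Fintype.card (Fin n))).filter
    fun t => f (P t) ≠ f (P (t + 1)) with hT
  set g := Q - Polynomial.C (1/2 : ℝ) with hg
  have hTmem : ∀ t ∈ T, t < n ∧ f (P t) ≠ f (P (t + 1)) := by
    intro t ht
    rw [hT, Finset.mem_filter, Finset.mem_range, Fintype.card_fin] at ht
    exact ht
  have hvals : ∀ t ∈ T,
      (g.eval (t : ℝ) ≤ 1/9 - 1/2 ∧ 1/2 ≤ g.eval ((t : ℝ) + 1)) ∨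
      (1/2 ≤ g.eval (t : ℝ) ∧ g.eval ((t : ℝ) + 1) ≤ 1/9 - 1/2) := by
    intro t ht
    obtain ⟨htn, hdif⟩ := hTmem t ht
    have h1 := hval t (by omega) (P t) (wt_path_stmt11 hP t (by omega))
    have h2 := hval (t + 1) (by omega) (P (t + 1)) (wt_path_stmt11 hP (t + 1) (by omega))
    have hcast : ((t + 1 : ℕ) : ℝ) = (t : ℝ) + 1 := by push_cast; ring
    rw [hcast] at h2
    simp only [hg, Polynomial.eval_sub, Polynomial.eval_C]
    cases hft : f (P t) with
    | false =>
      have hft1 : f (P (t + 1)) = true := by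
        cases h : f (P (t + 1))
        · exact absurd (hft.trans h.symm) hdif
        · rfl
      exact Or.inl ⟨by linarith [h1.2 hft], by linarith [h2.1 hft1]⟩
    | true =>
      have hft1 : f (P (t + 1)) = false := by
        cases h : f (P (t + 1))
        · rfl
        · exact absurd (hft.trans h.symm) hdif
      exact Or.inr ⟨by linarith [h1.1 hft], by linarith [h2.2 hft1]⟩
  have hroot : ∀ t : ℕ, ∃ r : ℝ, t ∈ T →
      r ∈ Set.Ioo (t : ℝ) ((t : ℝ) + 1) ∧ Polynomial.eval r g = 0 := by
    intro t
    by_cases ht : t ∈ T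
    · have hab : (t : ℝ) ≤ (t : ℝ) + 1 := by linarith
      have hcont : ContinuousOn (fun x : ℝ => g.eval x) (Set.Icc (t : ℝ) ((t : ℝ) + 1)) :=
        (Polynomial.continuous g).continuousOn
      rcases hvals t ht with ⟨hlo, hhi⟩ | ⟨hhi, hlo⟩
      · have h0 : (0 : ℝ) ∈ Set.Ioo (g.eval (t : ℝ)) (g.eval ((t : ℝ) + 1)) :=
          ⟨by linarith, by linarith⟩
        obtain ⟨r, hr, hr0⟩ := intermediate_value_Ioo hab hcont h0
        exact ⟨r, fun _ => ⟨hr, hr0⟩⟩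
      · have h0 : (0 : ℝ) ∈ Set.Ioo (g.eval ((t : ℝ) + 1)) (g.eval (t : ℝ)) :=
          ⟨by linarith, by linarith⟩
        obtain ⟨r, hr, hr0⟩ := intermediate_value_Ioo' hab hcont h0
        exact ⟨r, fun _ => ⟨hr, hr0⟩⟩
    · exact ⟨0, fun h => absurd h ht⟩
  choose ρ hρ using hroot
  rcases Finset.eq_empty_or_nonempty T with hTe | ⟨t0, ht0⟩
  · rw [hTe]
    simp
  · have gne : g ≠ 0 := by
      intro h0
      rcases hvals t0 ht0 with ⟨_, hv⟩ | ⟨hv, _⟩ <;>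
        · rw [h0] at hv
          simp at hv
          linarith
    have hsub : ∀ t ∈ T, ρ t ∈ g.roots.toFinset := by
      intro t ht
      rw [Multiset.mem_toFinset, Polynomial.mem_roots']
      exact ⟨gne, ((hρ t) ht).2⟩
    have hinj : Set.InjOn ρ ↑T := by
      intro a ha b hb hab
      rw [Finset.mem_coe] at ha hb
      by_contra hne2
      obtain ⟨ha1, ha2⟩ := ((hρ a) ha).1
      obtain ⟨hb1, hb2⟩ := ((hρ b) hb).1
      rcases lt_or_gt_of_ne hne2 with h | h
      · have : (a : ℝ) + 1 ≤ (b : ℝ) := by exact_mod_cast h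
        rw [hab] at ha2
        linarith
      · have : (b : ℝ) + 1 ≤ (a : ℝ) := by exact_mod_cast h
        rw [← hab] at hb2
        linarith
    calc T.card ≤ g.roots.toFinset.card := Finset.card_le_card_of_injOn ρ hsub hinj
      _ ≤ Multiset.card g.roots := g.roots.toFinset_card_le
      _ ≤ g.natDegree := Polynomial.card_roots' g
      _ ≤ max Q.natDegree (Polynomial.C (1/2 : ℝ)).natDegree := Polynomial.natDegree_sub_le _ _
      _ ≤ 2 * N13 f := by
          rw [Polynomial.natDegree_C]
          simpa using hQdeg2
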